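/- Let P and Q be hereditary graph properties such that P∘Q does not contain all graphs. Then dc(P∘Q) ≥ dc(P) + dc(Q). -/

import Mathlib

attribute [local instance] Classical.propDecidable

open SimpleGraph

/-- A finite simple graph, bundled. -/
structure FGraph : Type 1 where
  V : Type
  [fin : Fintype V]
  graph : SimpleGraph V

attribute [instance] FGraph.fin

namespace FGraph

/-- `G.IsInduced H` : `G` is isomorphic to an induced subgraph of `H`. -/
def IsInduced (G H : FGraph) : Prop := Nonempty (G.graph ↪g H.graph)

/-- `G.IsSub H` : `G` is isomorphic to a subgraph of `H`. -/
def IsSub (G H : FGraph) : Prop := ∃ f : G.graph →g H.graph, Function.Injective f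

/-- `G.Iso H` : `G` and `H` are isomorphic. -/
def Iso (G H : FGraph) : Prop := Nonempty (G.graph ≃g H.graph)

/-- The induced subgraph of `G` on a set `s` of vertices. -/
noncomputable def induce (G : FGraph) (s : Set G.V) : FGraph := ⟨↥s, G.graph.induce s⟩

end FGraph

/-- A class of finite graphs. -/
abbrev GProp : Type 1 := FGraph → Prop

/-- A graph property: a nonempty isomorphism-closed class of finite graphs,
each having at least one vertex. -/
structure IsGProp (P : GProp) : Prop where
  nonempty : ∃ G, P G
  vertexNonempty : ∀ G, P G → Nonempty G.V
  isoClosed : ∀ G H, G.Iso H → P G → P H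

namespace GProp

/-- The product `P ∘ Q` of two classes of graphs. -/
def prod (P Q : GProp) : GProp := fun G =>
  Nonempty G.V ∧ ∃ s : Set G.V,
    (s.Nonempty → P (G.induce s)) ∧ ((sᶜ : Set G.V).Nonempty → Q (G.induce (sᶜ : Set G.V)))

/-- The product `∏ i, Ps i` of an indexed family of classes of graphs:
the vertex set is partitioned into the (possibly empty) preimages of a map
to the index set, and every nonempty part must induce a graph in the
corresponding class. -/
def iProd {I : Type*} (Ps : I → GProp) : GProp := fun G =>
  Nonempty G.V ∧ ∃ f : G.V → I,
    ∀ i, (f ⁻¹' {i}).Nonempty → Ps i (G.induce (f ⁻¹' {i}))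

end GProp

/-- Closed under induced subgraphs with at least one vertex. -/
def IndHereditary (P : GProp) : Prop :=
  ∀ G H : FGraph, P G → H.IsInduced G → Nonempty H.V → P H

/-- Closed under subgraphs with at least one vertex. -/
def Hereditary (P : GProp) : Prop :=
  ∀ G H : FGraph, P G → H.IsSub G → Nonempty H.V → P H

/-- Closed under induced supergraphs. -/
def GeqHereditary (P : GProp) : Prop :=
  ∀ G H : FGraph, P H → H.IsInduced G → P G


/-- `H + e`: the graph obtained from `H` by adding the edge `{a, b}`. -/
def addEdge (H : FGraph) (a b : H.V) : FGraph :=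
  ⟨H.V, H.graph ⊔ SimpleGraph.fromEdgeSet {s(a, b)}⟩

/-- `G` is `P`-maximal: `G ∈ P` but adding any edge of the complement of `G`
leaves `P`. -/
def PMaximal (P : GProp) (G : FGraph) : Prop :=
  P G ∧ ∀ a b : G.V, a ≠ b → ¬ G.graph.Adj a b → ¬ P (addEdge G a b)

/-- `c(P)`: the largest `r` such that the complete graph `K_r` belongs to `P`. -/
noncomputable def cNum (P : GProp) : ℕ :=
  sSup {r : ℕ | P ⟨Fin r, (⊤ : SimpleGraph (Fin r))⟩}

/-- `G ∈ M*(P)`: `G` is `P`-maximal with at least `c(P)` vertices. -/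
def PMaxStar (P : GProp) (G : FGraph) : Prop :=
  PMaximal P G ∧ cNum P ≤ Fintype.card G.V

/-- `dc(G)`: the number of ind-parts of `G`, i.e. the number of connected
components of the complement of `G`. -/
noncomputable def dc (G : FGraph) : ℕ := Fintype.card (G.graphᶜ.ConnectedComponent)

/-- `dc(P) = min {dc(G) : G ∈ M*(P)}`. -/
noncomputable def dcP (P : GProp) : ℕ := sInf {n : ℕ | ∃ G, PMaxStar P G ∧ dc G = n}

namespace Aux16

open GProp FGraph

lemma cardIrrel {α : Type} {i1 i2 : Fintype α} :
    @Fintype.card α i1 = @Fintype.card α i2 :=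
  congrArg (fun i => @Fintype.card α i) (Subsingleton.elim i1 i2)

/-! ### Complete graphs and `cNum` -/

/-- The set of sizes of complete graphs belonging to `P`. -/
def KSet (P : GProp) : Set ℕ := {r : ℕ | P ⟨Fin r, (⊤ : SimpleGraph (Fin r))⟩}

lemma cNum_def (P : GProp) : cNum P = sSup (KSet P) := rfl

/-- An iso of graphs on the same vertex type from an equality. -/
def graphEqIso {W : Type} {g1 g2 : SimpleGraph W} (h : g1 = g2) : g1 ≃g g2 := by
  subst h; exact RelIso.refl _

/-- The induced graph on a full set is isomorphic to the graph itself. -/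
def induceAllIso {W : Type} (g : SimpleGraph W) (s : Set W) (hs : ∀ x, x ∈ s) :
    SimpleGraph.induce s g ≃g g :=
  ⟨Equiv.subtypeUnivEquiv hs, Iff.rfl⟩

lemma isSub_K (H : FGraph) {r : ℕ} (h : Fintype.card H.V ≤ r) :
    H.IsSub ⟨Fin r, (⊤ : SimpleGraph (Fin r))⟩ := by
  have h' : Fintype.card H.V ≤ Fintype.card (Fin r) := by simpa using h
  obtain ⟨f⟩ := Function.Embedding.nonempty_of_card_le h'
  exact ⟨⟨f, fun {a b} hab => by
    simp only [SimpleGraph.top_adj]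
    exact fun he => hab.ne (f.injective he)⟩, f.injective⟩

lemma small_mem {P : GProp} (hher : Hereditary P) {r : ℕ} (hr : r ∈ KSet P)
    (H : FGraph) (hne : Nonempty H.V) (hcard : Fintype.card H.V ≤ r) : P H :=
  hher _ H hr (isSub_K H hcard) hne

lemma one_mem_KSet {P : GProp} (hP : IsGProp P) (hher : Hereditary P) : (1 : ℕ) ∈ KSet P := by
  obtain ⟨G, hG⟩ := hP.nonempty
  obtain ⟨v⟩ := hP.vertexNonempty G hG
  refine hher G ⟨Fin 1, (⊤ : SimpleGraph (Fin 1))⟩ hG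
    ⟨⟨fun _ => v, fun {a b} hab => absurd (Subsingleton.elim a b) hab.ne⟩,
      fun a b _ => Subsingleton.elim a b⟩ ⟨0⟩

lemma KSet_bdd {P : GProp} (hher : Hereditary P) (H0 : FGraph) (hne : Nonempty H0.V)
    (h0 : ¬ P H0) : BddAbove (KSet P) := by
  refine ⟨Fintype.card H0.V, fun r hr => ?_⟩
  by_contra hlt
  push_neg at hlt
  exact h0 (small_mem hher hr H0 hne hlt.le)

lemma K_cNum_mem {P : GProp} (hP : IsGProp P) (hher : Hereditary P)
    (hbdd : BddAbove (KSet P)) : cNum P ∈ KSet P :=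
  Nat.sSup_mem ⟨1, one_mem_KSet hP hher⟩ hbdd

lemma one_le_cNum {P : GProp} (hP : IsGProp P) (hher : Hereditary P)
    (hbdd : BddAbove (KSet P)) : 1 ≤ cNum P :=
  le_csSup hbdd (one_mem_KSet hP hher)

lemma mem_of_card_le {P : GProp} (hP : IsGProp P) (hher : Hereditary P)
    (hbdd : BddAbove (KSet P)) (H : FGraph) (hne : Nonempty H.V)
    (hcard : Fintype.card H.V ≤ cNum P) : P H :=
  small_mem hher (K_cNum_mem hP hher hbdd) H hne hcard

/-! ### Subgraph helpers -/

lemma induce_isSub_of_subset (G : FGraph) {s t : Set G.V} (h : s ⊆ t) :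
    (G.induce s).IsSub (G.induce t) := by
  exact ⟨(SimpleGraph.induceHomOfLE (G := G.graph) h).toHom,
    (SimpleGraph.induceHomOfLE (G := G.graph) h).injective⟩

/-! ### The product is hereditary, contains `P` and `Q` -/

lemma hered_prod {P Q : GProp} (hhP : Hereditary P) (hhQ : Hereditary Q) :
    Hereditary (GProp.prod P Q) := by
  rintro G H ⟨hGne, t, h1, h2⟩ ⟨f, hf⟩ hne
  refine ⟨hne, f ⁻¹' t, ?_, ?_⟩
  · rintro ⟨x, hx⟩
    have htne : t.Nonempty := ⟨f x, hx⟩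
    refine hhP (G.induce t) (H.induce (f ⁻¹' t)) (h1 htne)
      ⟨SimpleGraph.induceHom f (Set.mapsTo_preimage f t), ?_⟩ ⟨⟨x, hx⟩⟩
    exact SimpleGraph.induceHom_injective f (Set.mapsTo_preimage f t) (hf.injOn)
  · rintro ⟨x, hx⟩
    have hx' : f x ∈ tᶜ := hx
    have htne : (tᶜ : Set G.V).Nonempty := ⟨f x, hx'⟩
    have hmt : Set.MapsTo f ((f ⁻¹' t)ᶜ : Set H.V) (tᶜ : Set G.V) := fun y hy => hy
    refine hhQ (G.induce (tᶜ : Set G.V)) (H.induce ((f ⁻¹' t)ᶜ : Set H.V)) (h2 htne)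
      ⟨SimpleGraph.induceHom f hmt, ?_⟩ ⟨⟨x, hx⟩⟩
    exact SimpleGraph.induceHom_injective f hmt (hf.injOn)

lemma mem_prod_left {P Q : GProp} (hP : IsGProp P) {G : FGraph} (hG : P G) :
    GProp.prod P Q G := by
  refine ⟨hP.vertexNonempty G hG, Set.univ, fun _ => ?_, fun h => absurd h (by simp)⟩
  exact hP.isoClosed G (G.induce Set.univ)
    ⟨(induceAllIso G.graph Set.univ (fun x => Set.mem_univ x)).symm⟩ hG

lemma mem_prod_right {P Q : GProp} (hQ : IsGProp Q) {G : FGraph} (hG : Q G) :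
    GProp.prod P Q G := by
  refine ⟨hQ.vertexNonempty G hG, ∅, fun h => absurd h (by simp), fun _ => ?_⟩
  exact hQ.isoClosed G (G.induce ((∅ : Set G.V)ᶜ))
    ⟨(induceAllIso G.graph ((∅ : Set G.V)ᶜ) (fun x => by simp)).symm⟩ hG

lemma isGProp_prod {P Q : GProp} (hP : IsGProp P) (hQ : IsGProp Q)
    (hhP : Hereditary P) (hhQ : Hereditary Q) : IsGProp (GProp.prod P Q) := by
  obtain ⟨G0, hG0⟩ := hP.nonempty
  refine ⟨⟨G0, mem_prod_left hP hG0⟩, fun G hG => hG.1, fun G H hiso hG => ?_⟩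
  obtain ⟨e⟩ := hiso
  have hne : Nonempty H.V := Nonempty.map e.toEquiv hG.1
  exact hered_prod hhP hhQ G H hG ⟨e.symm.toHom, e.symm.injective⟩ hne

/-! ### `K_{c(P)+c(Q)}` belongs to the product -/

lemma K_add_mem_prod {P Q : GProp} (hP : IsGProp P) (hQ : IsGProp Q)
    (hherP : Hereditary P) (hherQ : Hereditary Q)
    (hbddP : BddAbove (KSet P)) (hbddQ : BddAbove (KSet Q)) :
    (cNum P + cNum Q) ∈ KSet (GProp.prod P Q) := by
  set m := cNum P with hm
  set n := cNum Q with hn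
  have hm1 : 1 ≤ m := one_le_cNum hP hherP hbddP
  have hn1 : 1 ≤ n := one_le_cNum hQ hherQ hbddQ
  set KG : FGraph := ⟨Fin (m + n), (⊤ : SimpleGraph (Fin (m + n)))⟩ with hKG
  show GProp.prod P Q KG
  have hne : Nonempty KG.V := ⟨⟨0, by omega⟩⟩
  refine ⟨hne, {i : Fin (m + n) | (i : ℕ) < m}, ?_, ?_⟩
  · intro h
    refine mem_of_card_le hP hherP hbddP _ h.to_subtype ?_
    refine le_trans (Fintype.card_le_of_injective
      (fun x => (⟨(x.1 : ℕ), x.2⟩ : Fin m)) ?_) (by simp; omega)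
    intro a b hab
    simp only [Fin.mk.injEq] at hab
    exact Subtype.ext (Fin.ext hab)
  · intro h
    refine mem_of_card_le hQ hherQ hbddQ _ h.to_subtype ?_
    have hkey : ∀ x : ↥({i : Fin (m + n) | (i : ℕ) < m}ᶜ : Set (Fin (m + n))),
        ¬ ((x.1 : ℕ) < m) := fun x => x.2
    refine le_trans (Fintype.card_le_of_injective
      (fun x => (⟨(x.1 : ℕ) - m, by have := x.1.2; have := hkey x; omega⟩ : Fin n)) ?_)
      (by simp; omega)
    intro a b hab
    simp only [Fin.mk.injEq] at hab
    have h2 := hkey a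
    have h3 := hkey b
    have h4 := a.1.2
    have h5 := b.1.2
    exact Subtype.ext (Fin.ext (by omega))

/-! ### Counting connected components across a partition with no crossing edges -/

section Components

variable {W : Type} {g : SimpleGraph W} {s : Set W}

lemma walk_stay (hcross : ∀ a ∈ s, ∀ b, b ∉ s → ¬ g.Adj a b)
    {u v : W} (p : g.Walk u v) :
    ∀ hu : u ∈ s, ∃ hv : v ∈ s,
      (SimpleGraph.induce s g).Reachable ⟨u, hu⟩ ⟨v, hv⟩ := by
  induction p with
  | nil => exact fun hu => ⟨hu, SimpleGraph.Reachable.refl _⟩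
  | @cons u w v h p ih =>
    intro hu
    have hw : w ∈ s := by
      by_contra hw
      exact hcross u hu w hw h
    obtain ⟨hv, hr⟩ := ih hw
    refine ⟨hv, SimpleGraph.Reachable.trans ?_ hr⟩
    exact SimpleGraph.Adj.reachable (show g.Adj u w from h)

lemma card_components_split {W : Type} [Fintype W] (g : SimpleGraph W) (s : Set W)
    (hcross : ∀ a ∈ s, ∀ b ∈ (sᶜ : Set W), ¬ g.Adj a b) :
    Fintype.card g.ConnectedComponent =
      Fintype.card (SimpleGraph.induce s g).ConnectedComponent +
      Fintype.card (SimpleGraph.induce (sᶜ : Set W) g).ConnectedComponent := by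
  have hcross1 : ∀ a ∈ s, ∀ b, b ∉ s → ¬ g.Adj a b := fun a ha b hb => hcross a ha b hb
  have hcross2 : ∀ a ∈ (sᶜ : Set W), ∀ b, b ∉ (sᶜ : Set W) → ¬ g.Adj a b := by
    intro a ha b hb hadj
    have hbs : b ∈ s := by simpa using hb
    exact hcross b hbs a ha hadj.symm
  classical
  let φ : (SimpleGraph.induce s g).ConnectedComponent ⊕
      (SimpleGraph.induce (sᶜ : Set W) g).ConnectedComponent → g.ConnectedComponent :=
    Sum.elim (SimpleGraph.ConnectedComponent.map (SimpleGraph.Embedding.induce s).toHom)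
      (SimpleGraph.ConnectedComponent.map (SimpleGraph.Embedding.induce (sᶜ : Set W)).toHom)
  have hψcoh : ∀ (v w : W) (p : g.Walk v w), p.IsPath →
      (if h : v ∈ s then
        (Sum.inl ((SimpleGraph.induce s g).connectedComponentMk ⟨v, h⟩) :
          (SimpleGraph.induce s g).ConnectedComponent ⊕
          (SimpleGraph.induce (sᶜ : Set W) g).ConnectedComponent)
      else Sum.inr ((SimpleGraph.induce (sᶜ : Set W) g).connectedComponentMk ⟨v, h⟩)) =
      (if h : w ∈ s then
        Sum.inl ((SimpleGraph.induce s g).connectedComponentMk ⟨w, h⟩)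
      else Sum.inr ((SimpleGraph.induce (sᶜ : Set W) g).connectedComponentMk ⟨w, h⟩)) := by
    intro v w p _
    by_cases hv : v ∈ s
    · obtain ⟨hw, hr⟩ := walk_stay hcross1 p hv
      rw [dif_pos hv, dif_pos hw]
      exact congrArg Sum.inl (SimpleGraph.ConnectedComponent.sound hr)
    · have hv' : v ∈ (sᶜ : Set W) := hv
      obtain ⟨hw, hr⟩ := walk_stay hcross2 p hv'
      have hw' : ¬ w ∈ s := hw
      rw [dif_neg hv, dif_neg hw']
      exact congrArg Sum.inr (SimpleGraph.ConnectedComponent.sound hr)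
  let ψ : g.ConnectedComponent → (SimpleGraph.induce s g).ConnectedComponent ⊕
      (SimpleGraph.induce (sᶜ : Set W) g).ConnectedComponent :=
    SimpleGraph.ConnectedComponent.lift _ hψcoh
  have hleft : ∀ x, ψ (φ x) = x := by
    rintro (c | c)
    · refine SimpleGraph.ConnectedComponent.ind (fun u => ?_) c
      show ψ (SimpleGraph.ConnectedComponent.map _ _) = _
      rw [SimpleGraph.ConnectedComponent.map_mk]
      show (if h : (u : W) ∈ s then _ else _) = _
      rw [dif_pos u.2]
      exact congrArg Sum.inl (congrArg _ (Subtype.ext rfl))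
    · refine SimpleGraph.ConnectedComponent.ind (fun u => ?_) c
      show ψ (SimpleGraph.ConnectedComponent.map _ _) = _
      rw [SimpleGraph.ConnectedComponent.map_mk]
      have hu : ¬ (u : W) ∈ s := u.2
      show (if h : (u : W) ∈ s then _ else _) = _
      rw [dif_neg hu]
      exact congrArg Sum.inr (congrArg _ (Subtype.ext rfl))
  have hright : ∀ c, φ (ψ c) = c := by
    refine SimpleGraph.ConnectedComponent.ind (fun v => ?_)
    show φ (if h : v ∈ s then _ else _) = _
    by_cases hv : v ∈ s
    · rw [dif_pos hv]
      exact SimpleGraph.ConnectedComponent.map_mk _ _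
    · rw [dif_neg hv]
      exact SimpleGraph.ConnectedComponent.map_mk _ _
  have e : ((SimpleGraph.induce s g).ConnectedComponent ⊕
      (SimpleGraph.induce (sᶜ : Set W) g).ConnectedComponent) ≃ g.ConnectedComponent :=
    ⟨φ, ψ, hleft, hright⟩
  rw [← Fintype.card_congr e, Fintype.card_sum]

end Components

lemma card_cc_eq {W : Type} {g1 g2 : SimpleGraph W} (h : g1 = g2)
    (i1 : Fintype g1.ConnectedComponent) (i2 : Fintype g2.ConnectedComponent) :
    @Fintype.card g1.ConnectedComponent i1 = @Fintype.card g2.ConnectedComponent i2 := by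
  subst h
  exact cardIrrel

/-! ### Graph equalities for `addEdge` and `induce` -/

lemma induce_sup_edge_of_not_mem {W : Type} {g : SimpleGraph W} {a b : W} {s : Set W}
    (h : a ∉ s ∨ b ∉ s) :
    SimpleGraph.induce s (g ⊔ SimpleGraph.fromEdgeSet {s(a, b)}) = SimpleGraph.induce s g := by
  ext ⟨x, hx⟩ ⟨y, hy⟩
  simp only [SimpleGraph.comap_adj, Function.Embedding.coe_subtype, SimpleGraph.sup_adj,
    SimpleGraph.fromEdgeSet_adj, Set.mem_singleton_iff, Sym2.eq_iff]
  constructor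
  · rintro (hg | ⟨(⟨rfl, rfl⟩ | ⟨rfl, rfl⟩), hne⟩)
    · exact hg
    · tauto
    · tauto
  · exact Or.inl

lemma induce_sup_edge_of_mem {W : Type} {g : SimpleGraph W} {a b : W} {s : Set W}
    (ha : a ∈ s) (hb : b ∈ s) :
    SimpleGraph.induce s (g ⊔ SimpleGraph.fromEdgeSet {s(a, b)}) =
      SimpleGraph.induce s g ⊔ SimpleGraph.fromEdgeSet {s((⟨a, ha⟩ : ↥s), (⟨b, hb⟩ : ↥s))} := by
  ext ⟨x, hx⟩ ⟨y, hy⟩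
  simp only [SimpleGraph.comap_adj, Function.Embedding.coe_subtype, SimpleGraph.sup_adj,
    SimpleGraph.fromEdgeSet_adj, Set.mem_singleton_iff, Sym2.eq_iff, Subtype.mk.injEq, ne_eq]

lemma induce_compl_eq {W : Type} (g : SimpleGraph W) (s : Set W) :
    SimpleGraph.induce s gᶜ = (SimpleGraph.induce s g)ᶜ := by
  ext ⟨x, hx⟩ ⟨y, hy⟩
  simp only [SimpleGraph.comap_adj, Function.Embedding.coe_subtype, SimpleGraph.compl_adj,
    ne_eq, Subtype.mk.injEq]

/-! ### The good partition -/

lemma card_pos_nonempty {α : Type} (s : Set α) [Fintype ↥s]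
    (h : 1 ≤ Fintype.card ↥s) : s.Nonempty :=
  nonempty_subtype.mp (Fintype.card_pos_iff.mp h)

lemma exists_good_partition {P Q : GProp} (hP : IsGProp P) (hQ : IsGProp Q)
    (hherP : Hereditary P) (hherQ : Hereditary Q)
    (hbddP : BddAbove (KSet P)) (hbddQ : BddAbove (KSet Q))
    (G : FGraph) (hG : GProp.prod P Q G)
    (hcard : cNum P + cNum Q ≤ Fintype.card G.V) :
    ∃ s : Set G.V, P (G.induce s) ∧ Q (G.induce (sᶜ : Set G.V)) ∧
      cNum P ≤ Fintype.card ↥s ∧ cNum Q ≤ Fintype.card ↥(sᶜ : Set G.V) := by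
  have hm1 : 1 ≤ cNum P := one_le_cNum hP hherP hbddP
  have hn1 : 1 ≤ cNum Q := one_le_cNum hQ hherQ hbddQ
  obtain ⟨hGne, s₀, h1, h2⟩ := hG
  have hcompl0 : Fintype.card ↥(s₀ᶜ : Set G.V) = Fintype.card G.V - Fintype.card ↥s₀ :=
    Fintype.card_compl_set s₀
  have hle0 : Fintype.card ↥s₀ ≤ Fintype.card G.V :=
    Fintype.card_le_of_injective Subtype.val Subtype.coe_injective
  rcases lt_or_ge (Fintype.card ↥s₀) (cNum P) with hlt | hge
  · -- grow s₀ to a set of size `cNum P`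
    obtain ⟨t, hsub, htc⟩ := Finset.exists_superset_card_eq (s := s₀.toFinset)
      (n := cNum P) (by rw [Set.toFinset_card]; exact hlt.le) (by omega)
    obtain ⟨u, hts, hcardt⟩ : ∃ u : Set G.V, s₀ ⊆ u ∧ Fintype.card ↥u = cNum P :=
      ⟨(↑t : Set G.V), fun x hx => hsub (Set.mem_toFinset.mpr hx), by
        rw [← Set.toFinset_card, Finset.toFinset_coe]; exact htc⟩
    have hcomplu : Fintype.card ↥(uᶜ : Set G.V) = Fintype.card G.V - Fintype.card ↥u :=
      Fintype.card_compl_set u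
    have hcu : ∀ i : Fintype ↥u, @Fintype.card ↥u i = cNum P :=
      fun i => Eq.trans cardIrrel hcardt
    have hcuc : ∀ i : Fintype ↥(uᶜ : Set G.V),
        @Fintype.card ↥(uᶜ : Set G.V) i = Fintype.card G.V - cNum P :=
      fun i => Eq.trans cardIrrel (by rw [hcomplu, hcardt])
    refine ⟨u, ?_, ?_, le_of_eq (hcu _).symm, by rw [hcuc]; omega⟩
    · exact mem_of_card_le hP hherP hbddP _
        (card_pos_nonempty _ (show 1 ≤ Fintype.card ↥u by rw [hcu]; omega)).to_subtype
        (le_of_eq (hcu _))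
    · have hsub' : (uᶜ : Set G.V) ⊆ (s₀ᶜ : Set G.V) := Set.compl_subset_compl.mpr hts
      have hcne : (uᶜ : Set G.V).Nonempty := card_pos_nonempty _ (by rw [hcuc]; omega)
      have hs₀cne : (s₀ᶜ : Set G.V).Nonempty := hcne.mono hsub'
      exact hherQ _ _ (h2 hs₀cne) (induce_isSub_of_subset G hsub') hcne.to_subtype
  · rcases lt_or_ge (Fintype.card ↥(s₀ᶜ : Set G.V)) (cNum Q) with hlt2 | hge2
    · -- shrink s₀ to a set of size `card G.V - cNum Q`
      obtain ⟨t, hsub, htc⟩ := Finset.exists_subset_card_eq (s := s₀.toFinset)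
        (n := Fintype.card G.V - cNum Q) (by rw [Set.toFinset_card]; omega)
      obtain ⟨u, hts, hcardt⟩ : ∃ u : Set G.V, u ⊆ s₀ ∧
          Fintype.card ↥u = Fintype.card G.V - cNum Q :=
        ⟨(↑t : Set G.V), fun x hx => Set.mem_toFinset.mp (hsub hx), by
          rw [← Set.toFinset_card, Finset.toFinset_coe]; exact htc⟩
      have hcomplu : Fintype.card ↥(uᶜ : Set G.V) = Fintype.card G.V - Fintype.card ↥u :=
        Fintype.card_compl_set u
      have hcu : ∀ i : Fintype ↥u, @Fintype.card ↥u i = Fintype.card G.V - cNum Q :=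
        fun i => Eq.trans cardIrrel hcardt
      have hcuc : ∀ i : Fintype ↥(uᶜ : Set G.V),
          @Fintype.card ↥(uᶜ : Set G.V) i = cNum Q :=
        fun i => Eq.trans cardIrrel (by rw [hcomplu, hcardt]; omega)
      refine ⟨u, ?_, ?_, by rw [hcu]; omega, le_of_eq (hcuc _).symm⟩
      · have htne : u.Nonempty := card_pos_nonempty _ (by rw [hcu]; omega)
        have hs₀ne : s₀.Nonempty := htne.mono hts
        exact hherP _ _ (h1 hs₀ne) (induce_isSub_of_subset G hts) htne.to_subtype
      · exact mem_of_card_le hQ hherQ hbddQ _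
          (card_pos_nonempty _
            (show 1 ≤ Fintype.card ↥(uᶜ : Set G.V) by rw [hcuc]; omega)).to_subtype
          (le_of_eq (hcuc _))
    · have hs0 : ∀ i : Fintype ↥s₀, cNum P ≤ @Fintype.card ↥s₀ i :=
        fun i => hge.trans_eq cardIrrel
      have hs0c : ∀ i : Fintype ↥(s₀ᶜ : Set G.V),
          cNum Q ≤ @Fintype.card ↥(s₀ᶜ : Set G.V) i :=
        fun i => hge2.trans_eq cardIrrel
      exact ⟨s₀, h1 (card_pos_nonempty _ (le_trans hm1 (hs0 _))),
        h2 (card_pos_nonempty _ (le_trans hn1 (hs0c _))), hs0 _, hs0c _⟩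

end Aux16

/-- if `P` and `Q` are hereditary graph properties and `P ∘ Q`
does not contain all graphs, then `dc(P ∘ Q) ≥ dc(P) + dc(Q)`. -/
theorem statement_16 (P Q : GProp) (hP : IsGProp P) (hQ : IsGProp Q)
    (hherP : Hereditary P) (hherQ : Hereditary Q)
    (hnotall : ¬ ∀ G : FGraph, Nonempty G.V → GProp.prod P Q G) :
    dcP P + dcP Q ≤ dcP (GProp.prod P Q) := by
  classical
  open Aux16 in
  push_neg at hnotall
  obtain ⟨H0, hne0, h0⟩ := hnotall
  have hherPQ : Hereditary (GProp.prod P Q) := hered_prod hherP hherQ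
  have hPQprop : IsGProp (GProp.prod P Q) := isGProp_prod hP hQ hherP hherQ
  have hbddPQ : BddAbove (KSet (GProp.prod P Q)) := KSet_bdd hherPQ H0 hne0 h0
  have h0P : ¬ P H0 := fun h => h0 (mem_prod_left hP h)
  have h0Q : ¬ Q H0 := fun h => h0 (mem_prod_right hQ h)
  have hbddP : BddAbove (KSet P) := KSet_bdd hherP H0 hne0 h0P
  have hbddQ : BddAbove (KSet Q) := KSet_bdd hherQ H0 hne0 h0Q
  -- `M*(P∘Q)` is nonempty: the complete graph on `c(P∘Q)` vertices is in it
  set c := cNum (GProp.prod P Q) with hc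
  have hKc : GProp.prod P Q ⟨Fin c, (⊤ : SimpleGraph (Fin c))⟩ :=
    K_cNum_mem hPQprop hherPQ hbddPQ
  have hKmax : PMaxStar (GProp.prod P Q) ⟨Fin c, (⊤ : SimpleGraph (Fin c))⟩ := by
    refine ⟨⟨hKc, fun a b hab hnadj => ?_⟩, by simp; omega⟩
    exact absurd hab (by simpa using hnadj)
  have hSne : {k : ℕ | ∃ G, PMaxStar (GProp.prod P Q) G ∧ dc G = k}.Nonempty :=
    ⟨_, _, hKmax, rfl⟩
  obtain ⟨G, hGmax, hGdc⟩ := Nat.sInf_mem hSne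
  have hgoal : dcP (GProp.prod P Q) = dc G := hGdc.symm
  rw [hgoal]
  -- bound on the number of vertices
  have hcple : cNum P + cNum Q ≤ c :=
    le_csSup hbddPQ (K_add_mem_prod hP hQ hherP hherQ hbddP hbddQ)
  have hcard : cNum P + cNum Q ≤ Fintype.card G.V := le_trans hcple hGmax.2
  -- get a good partition
  obtain ⟨s, hsP, hsQ, hsc1, hsc2⟩ :=
    exists_good_partition hP hQ hherP hherQ hbddP hbddQ G hGmax.1.1 hcard
  have hm1 : 1 ≤ cNum P := one_le_cNum hP hherP hbddP
  have hn1 : 1 ≤ cNum Q := one_le_cNum hQ hherQ hbddQ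
  have hsne : s.Nonempty :=
    card_pos_nonempty _ (hm1.trans (hsc1.trans_eq cardIrrel))
  have hscne : (sᶜ : Set G.V).Nonempty :=
    card_pos_nonempty _ (hn1.trans (hsc2.trans_eq cardIrrel))
  have hVne : Nonempty G.V := hsne.elim fun x hx => ⟨x⟩
  -- all edges between `s` and `sᶜ` are present
  have hjoin : ∀ a ∈ s, ∀ b ∈ (sᶜ : Set G.V), G.graph.Adj a b := by
    intro a ha b hb
    by_contra hnadj
    have hne : a ≠ b := fun h => hb (h ▸ ha)
    refine hGmax.1.2 a b hne hnadj ⟨hVne, s, fun _ => ?_, fun _ => ?_⟩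
    · exact hP.isoClosed (G.induce s) ((addEdge G a b).induce s)
        ⟨graphEqIso (induce_sup_edge_of_not_mem (Or.inr hb)).symm⟩ hsP
    · exact hQ.isoClosed (G.induce (sᶜ : Set G.V)) ((addEdge G a b).induce (sᶜ : Set G.V))
        ⟨graphEqIso (induce_sup_edge_of_not_mem (Or.inl (Set.notMem_compl_iff.mpr ha))).symm⟩ hsQ
  -- the part on `s` is `P`-maximal
  have hmaxA : PMaximal P (G.induce s) := by
    refine ⟨hsP, fun x' y' hxy hnadj hPadd => ?_⟩
    obtain ⟨x, hxs⟩ := x'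
    obtain ⟨y, hys⟩ := y'
    have hxy' : x ≠ y := fun h => hxy (by exact Subtype.ext h)
    have hnadj' : ¬ G.graph.Adj x y := fun h => hnadj h
    refine hGmax.1.2 x y hxy' hnadj' ⟨hVne, s, fun _ => ?_, fun _ => ?_⟩
    · refine hP.isoClosed (addEdge (G.induce s) ⟨x, hxs⟩ ⟨y, hys⟩)
        ((addEdge G x y).induce s) ⟨graphEqIso ?_⟩ hPadd
      exact (induce_sup_edge_of_mem hxs hys).symm
    · exact hQ.isoClosed (G.induce (sᶜ : Set G.V))
        ((addEdge G x y).induce (sᶜ : Set G.V))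
        ⟨graphEqIso (induce_sup_edge_of_not_mem
          (Or.inl (Set.notMem_compl_iff.mpr hxs))).symm⟩ hsQ
  -- the part on `sᶜ` is `Q`-maximal
  have hmaxB : PMaximal Q (G.induce (sᶜ : Set G.V)) := by
    refine ⟨hsQ, fun x' y' hxy hnadj hQadd => ?_⟩
    obtain ⟨x, hxs⟩ := x'
    obtain ⟨y, hys⟩ := y'
    have hxy' : x ≠ y := fun h => hxy (by exact Subtype.ext h)
    have hnadj' : ¬ G.graph.Adj x y := fun h => hnadj h
    refine hGmax.1.2 x y hxy' hnadj' ⟨hVne, s, fun _ => ?_, fun _ => ?_⟩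
    · exact hP.isoClosed (G.induce s) ((addEdge G x y).induce s)
        ⟨graphEqIso (induce_sup_edge_of_not_mem (Or.inl hxs)).symm⟩ hsP
    · refine hQ.isoClosed (addEdge (G.induce (sᶜ : Set G.V)) ⟨x, hxs⟩ ⟨y, hys⟩)
        ((addEdge G x y).induce (sᶜ : Set G.V)) ⟨graphEqIso ?_⟩ hQadd
      exact (induce_sup_edge_of_mem hxs hys).symm
  -- `dc G` splits
  have hcross : ∀ a ∈ s, ∀ b ∈ (sᶜ : Set G.V), ¬ (G.graphᶜ).Adj a b := by
    intro a ha b hb hadj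
    rw [SimpleGraph.compl_adj] at hadj
    exact hadj.2 (hjoin a ha b hb)
  have hsplit := card_components_split (G.graphᶜ) s hcross
  have hA : dc (G.induce s) =
      Fintype.card (SimpleGraph.induce s (G.graphᶜ)).ConnectedComponent :=
    card_cc_eq (induce_compl_eq G.graph s).symm _ _
  have hB : dc (G.induce (sᶜ : Set G.V)) =
      Fintype.card (SimpleGraph.induce (sᶜ : Set G.V) (G.graphᶜ)).ConnectedComponent :=
    card_cc_eq (induce_compl_eq G.graph (sᶜ : Set G.V)).symm _ _
  have hdcsplit : dc G = dc (G.induce s) + dc (G.induce (sᶜ : Set G.V)) := by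
    rw [hA, hB]
    exact cardIrrel.trans (hsplit.trans (congrArg₂ (· + ·) cardIrrel cardIrrel))
  -- conclude
  have hPle : dcP P ≤ dc (G.induce s) :=
    Nat.sInf_le ⟨G.induce s, ⟨hmaxA, hsc1.trans_eq cardIrrel⟩, rfl⟩
  have hQle : dcP Q ≤ dc (G.induce (sᶜ : Set G.V)) :=
    Nat.sInf_le ⟨G.induce (sᶜ : Set G.V), ⟨hmaxB, hsc2.trans_eq cardIrrel⟩, rfl⟩
  exact (add_le_add hPle hQle).trans hdcsplit.ge
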